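/- Assume γ ≡ 0 and let η be a positive martingale on [0,T] with E[η_T^2] < ∞ (no further integrability required). Then for every initial value ξ ∈ ℝ the control with constant closure rate x_t = ξ·(1 − t/T) is admissible and optimal: J(x) ≤ J(y) for every admissible control y ∈ A_0(ξ). -/

import Mathlib

open MeasureTheory Set
open scoped ENNReal Classical

noncomputable section

/-- The cost functional `J(x) = E[∫_0^T (η_t |u_t|^p + γ_t |x_t|^p) dt]`, valued in `[0,∞]`,
where `u` is the pathwise derivative of the control `x`. -/
def cost {Ω : Type*} [MeasurableSpace Ω] (P : Measure Ω) (T p : ℝ)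
    (η γ : ℝ → Ω → ℝ) (x u : ℝ → Ω → ℝ) : ℝ≥0∞ :=
  ∫⁻ ω, (∫⁻ t in Set.Ioc (0 : ℝ) T,
    ENNReal.ofReal (η t ω * |u t ω| ^ p + γ t ω * |x t ω| ^ p)) ∂P

/-- `x` is a control with initial value `ξ` and (pathwise) derivative `u`:
`x` and `u` are progressively measurable, the paths of `x` are absolutely continuous with
`x_t = ξ + ∫_0^t u_s ds` on `[0,T]`. -/
def IsControl {Ω : Type*} {m0 : MeasurableSpace Ω} (ℱ : Filtration ℝ m0)
    (T ξ : ℝ) (x u : ℝ → Ω → ℝ) : Prop :=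
  ProgMeasurable ℱ u ∧ ProgMeasurable ℱ x ∧
  (∀ ω, IntegrableOn (fun s => u s ω) (Set.Icc 0 T)) ∧
  (∀ ω, ∀ t ∈ Set.Icc (0 : ℝ) T, x t ω = ξ + ∫ s in (0 : ℝ)..t, u s ω)

/-- An admissible control: a control with initial value `ξ` satisfying `x_T = 0` a.s. -/
def IsAdmissible {Ω : Type*} {m0 : MeasurableSpace Ω} (ℱ : Filtration ℝ m0)
    (P : Measure Ω) (T ξ : ℝ) (x u : ℝ → Ω → ℝ) : Prop :=
  IsControl ℱ T ξ x u ∧ ∀ᵐ ω ∂P, x T ω = 0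

lemma prog_min_measurable {Ω : Type*} {m0 : MeasurableSpace Ω} {ℱ : Filtration ℝ m0}
    {f : ℝ → Ω → ℝ} (hf : ProgMeasurable ℱ f) (T : ℝ) :
    Measurable (fun z : ℝ × Ω => f (min z.1 T) z.2) := by
  have h1 : @Measurable (ℝ × Ω) (Set.Iic T × Ω)
      Prod.instMeasurableSpace (Subtype.instMeasurableSpace.prod (ℱ T))
      (fun z => (⟨min z.1 T, Set.mem_Iic.mpr (min_le_right _ _)⟩, z.2)) := by
    refine Measurable.prodMk ?_ ?_
    · exact Measurable.subtype_mk (measurable_fst.min measurable_const)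
    · exact measurable_snd.mono le_rfl (ℱ.le T)
  exact ((hf T).measurable).comp h1

lemma Ioi_inter_Ioc_empty {T : ℝ} : Set.Ioi T ∩ Set.Ioc (0:ℝ) T = ∅ :=
  Set.eq_empty_of_forall_notMem fun s hs => absurd hs.2.2 (not_le.2 hs.1)

lemma prog_aemeasurable_right {Ω : Type*} {m0 : MeasurableSpace Ω} {ℱ : Filtration ℝ m0}
    {f : ℝ → Ω → ℝ} (hf : ProgMeasurable ℱ f) {T : ℝ} (P : Measure Ω) [SFinite P] :
    AEMeasurable (fun z : Ω × ℝ => f z.2 z.1)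
      (P.prod (volume.restrict (Set.Ioc 0 T))) := by
  have hm : Measurable (fun z : Ω × ℝ => f (min z.2 T) z.1) :=
    (prog_min_measurable hf T).comp measurable_swap
  refine hm.aemeasurable.congr ?_
  have hnull : (P.prod (volume.restrict (Set.Ioc 0 T))) (Set.univ ×ˢ Set.Ioi T) = 0 := by
    rw [Measure.prod_prod, Measure.restrict_apply measurableSet_Ioi, Ioi_inter_Ioc_empty]
    simp
  have hae : ∀ᵐ z ∂(P.prod (volume.restrict (Set.Ioc 0 T))), z.2 ≤ T := by
    rw [ae_iff]
    refine measure_mono_null ?_ hnull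
    intro z hz
    simp only [Set.mem_setOf_eq, not_le] at hz
    exact ⟨Set.mem_univ _, hz⟩
  filter_upwards [hae] with z hz
  rw [min_eq_left hz]

lemma prog_aemeasurable_left {Ω : Type*} {m0 : MeasurableSpace Ω} {ℱ : Filtration ℝ m0}
    {f : ℝ → Ω → ℝ} (hf : ProgMeasurable ℱ f) {T : ℝ} (P : Measure Ω) [SFinite P] :
    AEMeasurable (fun z : ℝ × Ω => f z.1 z.2)
      ((volume.restrict (Set.Ioc 0 T)).prod P) := by
  have hm : Measurable (fun z : ℝ × Ω => f (min z.1 T) z.2) := prog_min_measurable hf T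
  refine hm.aemeasurable.congr ?_
  have hnull : ((volume.restrict (Set.Ioc 0 T)).prod P) (Set.Ioi T ×ˢ Set.univ) = 0 := by
    rw [Measure.prod_prod, Measure.restrict_apply measurableSet_Ioi, Ioi_inter_Ioc_empty]
    simp
  have hae : ∀ᵐ z ∂((volume.restrict (Set.Ioc 0 T)).prod P), z.1 ≤ T := by
    rw [ae_iff]
    refine measure_mono_null ?_ hnull
    intro z hz
    simp only [Set.mem_setOf_eq, not_le] at hz
    exact ⟨hz, Set.mem_univ _⟩
  filter_upwards [hae] with z hz
  rw [min_eq_left hz]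

lemma lintegral_mul_G_eq {Ω : Type*} {m : MeasurableSpace Ω} [m0 : MeasurableSpace Ω]
    (hm : m ≤ m0) (P : Measure Ω)
    {f g : Ω → ℝ} (hf : Measurable f) (hg : Measurable g)
    (hfi : Integrable f P) (hgi : Integrable g P)
    (hf0 : 0 ≤ᵐ[P] f) (hg0 : 0 ≤ᵐ[P] g)
    (hset : ∀ A, MeasurableSet[m] A → ∫ ω in A, f ω ∂P = ∫ ω in A, g ω ∂P)
    {G : Ω → ℝ≥0∞} (hG : Measurable[m] G) :
    ∫⁻ ω, ENNReal.ofReal (f ω) * G ω ∂P = ∫⁻ ω, ENNReal.ofReal (g ω) * G ω ∂P := by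
  have hGm0 : Measurable G := hG.mono hm le_rfl
  have hmeq : (P.withDensity fun ω => ENNReal.ofReal (f ω)).trim hm
      = (P.withDensity fun ω => ENNReal.ofReal (g ω)).trim hm := by
    refine @Measure.ext Ω m _ _ fun A hA => ?_
    rw [trim_measurableSet_eq hm hA, trim_measurableSet_eq hm hA,
      withDensity_apply _ (hm A hA), withDensity_apply _ (hm A hA),
      ← ofReal_integral_eq_lintegral_ofReal (hfi.restrict) (ae_restrict_of_ae hf0),
      ← ofReal_integral_eq_lintegral_ofReal (hgi.restrict) (ae_restrict_of_ae hg0),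
      hset A hA]
  calc ∫⁻ ω, ENNReal.ofReal (f ω) * G ω ∂P
      = ∫⁻ ω, G ω ∂(P.withDensity fun ω => ENNReal.ofReal (f ω)) :=
        (lintegral_withDensity_eq_lintegral_mul P hf.ennreal_ofReal hGm0).symm
    _ = ∫⁻ ω, G ω ∂((P.withDensity fun ω => ENNReal.ofReal (f ω)).trim hm) :=
        (lintegral_trim hm hG).symm
    _ = ∫⁻ ω, G ω ∂((P.withDensity fun ω => ENNReal.ofReal (g ω)).trim hm) := by rw [hmeq]
    _ = ∫⁻ ω, G ω ∂(P.withDensity fun ω => ENNReal.ofReal (g ω)) := lintegral_trim hm hG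
    _ = ∫⁻ ω, ENNReal.ofReal (g ω) * G ω ∂P :=
        lintegral_withDensity_eq_lintegral_mul P hg.ennreal_ofReal hGm0

lemma pathwise_holder {T p ξ : ℝ} (hT : 0 < T) (hp : 1 < p)
    {w : ℝ → ℝ} (hw : MeasureTheory.IntegrableOn w (Set.Icc 0 T))
    (hsum : (∫ s in (0:ℝ)..T, w s) = -ξ) :
    ENNReal.ofReal (T * |ξ / T| ^ p) ≤ ∫⁻ t in Set.Ioc 0 T, ENNReal.ofReal (|w t| ^ p) := by
  have hwIoc : IntegrableOn w (Set.Ioc 0 T) := hw.mono_set Set.Ioc_subset_Icc_self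
  have hpq : p.HolderConjugate (p / (p - 1)) := Real.HolderConjugate.conjExponent hp
  set q : ℝ := p / (p - 1) with hqdef
  set μ := volume.restrict (Set.Ioc (0:ℝ) T) with hμ
  set A : ℝ≥0∞ := ∫⁻ t, ENNReal.ofReal (|w t| ^ p) ∂μ with hA
  have hfmeas : AEMeasurable (fun t => ENNReal.ofReal |w t|) μ :=
    (continuous_abs.measurable.ennreal_ofReal).comp_aemeasurable hwIoc.aemeasurable
  have hfp : ∀ t, (ENNReal.ofReal |w t|) ^ p = ENNReal.ofReal (|w t| ^ p) := fun t =>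
    ENNReal.ofReal_rpow_of_nonneg (abs_nonneg _) (le_of_lt hpq.pos)
  rcases eq_or_ne A ⊤ with hAtop | hAtop
  · simp [hAtop]
  -- Hölder
  have holder := ENNReal.lintegral_mul_le_Lp_mul_Lq μ hpq hfmeas
      (aemeasurable_const (b := (1:ℝ≥0∞)))
  simp only [Pi.mul_apply, mul_one, ENNReal.one_rpow, lintegral_const, one_mul] at holder
  have hμuniv : μ Set.univ = ENNReal.ofReal T := by
    rw [hμ, Measure.restrict_apply_univ, Real.volume_Ioc, sub_zero]
  rw [hμuniv] at holder
  simp only [hfp] at holder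
  -- |ξ| ≤ ∫ |w|
  have hxi : ENNReal.ofReal |ξ| ≤ ∫⁻ t, ENNReal.ofReal |w t| ∂μ := by
    rw [← ofReal_integral_eq_lintegral_ofReal hwIoc.abs (ae_of_all _ fun t => abs_nonneg _)]
    refine ENNReal.ofReal_le_ofReal ?_
    calc |ξ| = |∫ s in (0:ℝ)..T, w s| := by rw [hsum, abs_neg]
    _ ≤ ∫ s in (0:ℝ)..T, |w s| := intervalIntegral.abs_integral_le_integral_abs hT.le
    _ = ∫ t in Set.Ioc 0 T, |w t| := intervalIntegral.integral_of_le hT.le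
  have h2 : ENNReal.ofReal |ξ| ≤ A ^ (1/p) * (ENNReal.ofReal T) ^ (1/q) := le_trans hxi holder
  have hiq : (1/p) * p = 1 := by field_simp
  have hq2 : (1/q) * p = p - 1 := by
    have h5 : (1/q) * p = p / q := by ring
    rw [h5, hpq.div_conj_eq_sub_one]
  have key : ENNReal.ofReal (|ξ| ^ p) ≤ A * ENNReal.ofReal (T ^ (p - 1)) := by
    calc ENNReal.ofReal (|ξ| ^ p) = (ENNReal.ofReal |ξ|) ^ p :=
        (ENNReal.ofReal_rpow_of_nonneg (abs_nonneg _) hpq.nonneg).symm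
    _ ≤ (A ^ (1/p) * (ENNReal.ofReal T) ^ (1/q)) ^ p := ENNReal.rpow_le_rpow h2 hpq.nonneg
    _ = A ^ ((1/p) * p) * (ENNReal.ofReal T) ^ ((1/q) * p) := by
        rw [ENNReal.mul_rpow_of_nonneg _ _ hpq.nonneg, ← ENNReal.rpow_mul, ← ENNReal.rpow_mul]
    _ = A * ENNReal.ofReal (T ^ (p - 1)) := by
        rw [hiq, hq2, ENNReal.rpow_one, ENNReal.ofReal_rpow_of_pos hT]
  have hTp : (0:ℝ) < T ^ (p - 1) := Real.rpow_pos_of_pos hT _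
  have h4 : T * T ^ (p - 1) = T ^ p := by
    have := Real.rpow_add hT 1 (p - 1)
    rw [Real.rpow_one] at this
    rw [← this]
    norm_num
  have hkey2 : ENNReal.ofReal (T * |ξ / T| ^ p) * ENNReal.ofReal (T ^ (p - 1))
      = ENNReal.ofReal (|ξ| ^ p) := by
    rw [← ENNReal.ofReal_mul (by positivity)]
    congr 1
    calc T * |ξ / T| ^ p * T ^ (p - 1)
        = |ξ| ^ p / T ^ p * (T * T ^ (p - 1)) := by
          rw [abs_div, abs_of_pos hT, Real.div_rpow (abs_nonneg _) hT.le]; ring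
      _ = |ξ| ^ p := by
          rw [h4]; exact div_mul_cancel₀ _ (ne_of_gt (Real.rpow_pos_of_pos hT p))
  rw [← hkey2] at key
  exact (ENNReal.mul_le_mul_iff_left (ENNReal.ofReal_pos.2 hTp).ne' ENNReal.ofReal_ne_top).mp key


/-- with `γ ≡ 0` and `η` a positive martingale on `[0,T]` with
`E[η_T^2] < ∞` (no further integrability required), for every `ξ ∈ ℝ` the control with
constant closure rate `x_t = ξ·(1 − t/T)` is admissible and optimal. -/
theorem linear_closure_optimal_for_martingale_weak
    {Ω : Type*} {m0 : MeasurableSpace Ω} (P : Measure Ω) [IsProbabilityMeasure P]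
    (ℱ : Filtration ℝ m0) (T p q : ℝ) (hT : 0 < T) (hp : 1 < p) (hq : q = p / (p - 1))
    (η γ : ℝ → Ω → ℝ) (hηprog : ProgMeasurable ℱ η)
    (hγ0 : ∀ t ω, γ t ω = 0)
    (hpos : ∀ t ω, 0 < η t ω)
    (hint : ∀ t, 0 ≤ t → t ≤ T → Integrable (η t) P)
    (hmart : ∀ s t, 0 ≤ s → s ≤ t → t ≤ T → P[η t | ℱ s] =ᵐ[P] η s)
    (hηT : ∫⁻ ω, ENNReal.ofReal ((η T ω) ^ 2) ∂P < ⊤)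
    (ξ : ℝ) (x u : ℝ → Ω → ℝ)
    (hxdef : ∀ t ω, x t ω = ξ * (1 - t / T))
    (hudef : ∀ t ω, u t ω = -(ξ / T)) :
    IsAdmissible ℱ P T ξ x u ∧
    (∀ y w, IsAdmissible ℱ P T ξ y w → cost P T p η γ x u ≤ cost P T p η γ y w) := by
  have hu' : u = fun _ _ => -(ξ / T) := funext fun t => funext fun ω => hudef t ω
  have hx' : x = fun t _ => ξ * (1 - t / T) := funext fun t => funext fun ω => hxdef t ω
  subst hu' hx'
  have hTne : T ≠ 0 := ne_of_gt hT
  set c : ℝ := |ξ / T| ^ p with hc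
  have hc0 : 0 ≤ c := Real.rpow_nonneg (abs_nonneg _) p
  set E : ℝ := ∫ ω, η T ω ∂P with hE
  have hE0 : 0 ≤ E := integral_nonneg fun ω => (hpos T ω).le
  -- admissibility
  constructor
  · refine ⟨⟨progMeasurable_const ℱ _, ?_, fun ω => ?_, fun ω t ht => ?_⟩, ?_⟩
    · refine StronglyAdapted.progMeasurable_of_continuous (fun i => stronglyMeasurable_const) ?_
      intro ω
      exact continuous_const.mul (continuous_const.sub (continuous_id.div_const T))
    · exact integrableOn_const measure_Icc_lt_top.ne
    · rw [intervalIntegral.integral_const]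
      simp only [smul_eq_mul, sub_zero]
      field_simp
      ring
    · refine Filter.Eventually.of_forall fun ω => ?_
      simp [div_self hTne]
  -- optimality
  -- expectation of η t equals E for every t in (0, T]
  have hexp : ∀ t, t ∈ Set.Ioc (0:ℝ) T → ∫⁻ ω, ENNReal.ofReal (η t ω) ∂P = ENNReal.ofReal E := by
    intro t ht
    rw [← ofReal_integral_eq_lintegral_ofReal (hint t ht.1.le ht.2)
      (Filter.Eventually.of_forall fun ω => (hpos t ω).le)]
    congr 1
    rw [← integral_congr_ae (hmart t T ht.1.le ht.2 le_rfl), integral_condExp (ℱ.le t)]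
  -- value of the linear control
  have hJx : cost P T p η γ (fun t _ => ξ * (1 - t / T)) (fun _ _ => -(ξ / T))
      = ENNReal.ofReal E * ENNReal.ofReal (T * c) := by
    unfold cost
    have hsimp : ∀ t ω, ENNReal.ofReal (η t ω * |(-(ξ / T))| ^ p
          + γ t ω * |ξ * (1 - t / T)| ^ p)
        = ENNReal.ofReal (η t ω) * ENNReal.ofReal c := by
      intro t ω
      rw [hγ0, zero_mul, add_zero, abs_neg, ← hc, ENNReal.ofReal_mul (hpos t ω).le]
    simp only [hsimp]
    rw [lintegral_lintegral_swap (((prog_aemeasurable_right hηprog P).ennreal_ofReal).mul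
      aemeasurable_const)]
    rw [setLIntegral_congr_fun measurableSet_Ioc (fun t ht => by
      rw [lintegral_mul_const' _ _ ENNReal.ofReal_ne_top, hexp t ht])]
    rw [setLIntegral_const, Real.volume_Ioc, sub_zero, mul_assoc, ← ENNReal.ofReal_mul hc0,
      mul_comm c T]
  rw [hJx]
  rintro y w ⟨⟨hwprog, hyprog, hwint, hyform⟩, hyT⟩
  unfold cost
  have hsimp : ∀ t ω, ENNReal.ofReal (η t ω * |w t ω| ^ p + γ t ω * |y t ω| ^ p)
      = ENNReal.ofReal (η t ω) * ENNReal.ofReal (|w t ω| ^ p) := by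
    intro t ω
    rw [hγ0, zero_mul, add_zero, ENNReal.ofReal_mul (hpos t ω).le]
  simp only [hsimp]
  have habs_p : Measurable fun r : ℝ => ENNReal.ofReal (|r| ^ p) :=
    ((continuous_abs.measurable).pow_const p).ennreal_ofReal
  have hwR : AEMeasurable (fun z : Ω × ℝ => ENNReal.ofReal (|w z.2 z.1| ^ p))
      (P.prod (volume.restrict (Set.Ioc 0 T))) :=
    habs_p.comp_aemeasurable (prog_aemeasurable_right hwprog P)
  have hwL : AEMeasurable (fun z : ℝ × Ω => ENNReal.ofReal (|w z.1 z.2| ^ p))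
      ((volume.restrict (Set.Ioc 0 T)).prod P) :=
    habs_p.comp_aemeasurable (prog_aemeasurable_left hwprog P)
  have hηTmeas : Measurable (η T) :=
    ((ProgMeasurable.stronglyAdapted hηprog T).measurable).mono (ℱ.le T) le_rfl
  calc ENNReal.ofReal E * ENNReal.ofReal (T * c)
      = ∫⁻ ω, ENNReal.ofReal (η T ω) * ENNReal.ofReal (T * c) ∂P := by
        rw [lintegral_mul_const' _ _ ENNReal.ofReal_ne_top,
          ← ofReal_integral_eq_lintegral_ofReal (hint T hT.le le_rfl)
            (Filter.Eventually.of_forall fun ω => (hpos T ω).le), ← hE]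
    _ ≤ ∫⁻ ω, (ENNReal.ofReal (η T ω)
          * ∫⁻ t in Set.Ioc 0 T, ENNReal.ofReal (|w t ω| ^ p)) ∂P := by
        refine lintegral_mono_ae ?_
        filter_upwards [hyT] with ω hω
        refine mul_le_mul_right ?_ _
        refine pathwise_holder hT hp (hwint ω) ?_
        have h0 := hyform ω T ⟨hT.le, le_rfl⟩
        rw [hω] at h0
        linarith
    _ = ∫⁻ ω, (∫⁻ t in Set.Ioc 0 T,
          ENNReal.ofReal (η T ω) * ENNReal.ofReal (|w t ω| ^ p)) ∂P := by
        refine lintegral_congr fun ω => ?_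
        rw [lintegral_const_mul' _ _ ENNReal.ofReal_ne_top]
    _ = ∫⁻ t in Set.Ioc 0 T, (∫⁻ ω,
          ENNReal.ofReal (η T ω) * ENNReal.ofReal (|w t ω| ^ p) ∂P) :=
        lintegral_lintegral_swap
          (((hηTmeas.comp measurable_fst).ennreal_ofReal.aemeasurable).mul hwR)
    _ = ∫⁻ t in Set.Ioc 0 T, (∫⁻ ω,
          ENNReal.ofReal (η t ω) * ENNReal.ofReal (|w t ω| ^ p) ∂P) := by
        refine setLIntegral_congr_fun measurableSet_Ioc
          (fun t ht => ?_)
        have hηtmeas : Measurable (η t) :=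
          ((ProgMeasurable.stronglyAdapted hηprog t).measurable).mono (ℱ.le t) le_rfl
        have hGmeas : Measurable[ℱ t] fun ω => ENNReal.ofReal (|w t ω| ^ p) :=
          habs_p.comp ((ProgMeasurable.stronglyAdapted hwprog t).measurable)
        refine lintegral_mul_G_eq (ℱ.le t) P hηTmeas hηtmeas
          (hint T hT.le le_rfl) (hint t ht.1.le ht.2)
          (Filter.Eventually.of_forall fun ω => (hpos T ω).le)
          (Filter.Eventually.of_forall fun ω => (hpos t ω).le)
          (fun A hA => ?_) hGmeas
        rw [← setIntegral_condExp (ℱ.le t) (hint T hT.le le_rfl) hA]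
        exact setIntegral_congr_ae (ℱ.le t A hA)
          ((hmart t T ht.1.le ht.2 le_rfl).mono fun ω h _ => h)
    _ = ∫⁻ ω, (∫⁻ t in Set.Ioc 0 T,
          ENNReal.ofReal (η t ω) * ENNReal.ofReal (|w t ω| ^ p)) ∂P :=
        lintegral_lintegral_swap
          (((prog_aemeasurable_left hηprog P).ennreal_ofReal).mul hwL)
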